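/- Let A and B be nearly simple algebras over a field F, with unique non-trivial ideals I_A and I_B. If every two-sided ideal of A ⊗ B is admissible, then Z(A/I_A) ⊗ Z(B/I_B) is a field, where Z(A/I_A) and Z(B/I_B) are the centers of the simple quotient algebras A/I_A and B/I_B. -/

import Mathlib

open TensorProduct

/-- `A` is nearly simple with unique non-trivial two-sided ideal `I`. -/
def IsNearlySimpleWith {A : Type*} [Ring A] (I : TwoSidedIdeal A) : Prop :=
  I ≠ ⊥ ∧ I ≠ ⊤ ∧
    (∀ J : TwoSidedIdeal A, J ≠ ⊥ → J ≠ ⊤ → J = I) ∧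
    (∃ x ∈ I, ∃ y ∈ I, x * y ≠ 0)

/-- The `F`-subspace of `A ⊗[F] B` spanned by elementary tensors `x ⊗ y` with `x ∈ S`
and `y ∈ T`. -/
def tmulSpan (F : Type*) {A B : Type*} [Field F] [Ring A] [Algebra F A] [Ring B]
    [Algebra F B] (S : Set A) (T : Set B) : Submodule F (A ⊗[F] B) :=
  Submodule.span F {t : A ⊗[F] B | ∃ x ∈ S, ∃ y ∈ T, t = x ⊗ₜ[F] y}

/-- A two-sided ideal of `A ⊗[F] B` is admissible if it is `{0}`, `A ⊗ B`, `I_A ⊗ I_B`,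
`I_A ⊗ B`, `A ⊗ I_B`, or `I_A ⊗ B + A ⊗ I_B`. -/
def Admissible (F : Type*) {A B : Type*} [Field F] [Ring A] [Algebra F A] [Ring B]
    [Algebra F B] (IA : TwoSidedIdeal A) (IB : TwoSidedIdeal B)
    (J : TwoSidedIdeal (A ⊗[F] B)) : Prop :=
  J = ⊥ ∨ J = ⊤ ∨
  (J : Set (A ⊗[F] B)) = ↑(tmulSpan F (IA : Set A) (IB : Set B)) ∨
  (J : Set (A ⊗[F] B)) = ↑(tmulSpan F (IA : Set A) (Set.univ : Set B)) ∨
  (J : Set (A ⊗[F] B)) = ↑(tmulSpan F (Set.univ : Set A) (IB : Set B)) ∨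
  (J : Set (A ⊗[F] B)) =
    ↑(tmulSpan F (IA : Set A) (Set.univ : Set B) ⊔ tmulSpan F (Set.univ : Set A) (IB : Set B))

section AuxNS

variable {F : Type*} [Field F]

/-- The underlying `F`-submodule of a two-sided ideal. -/
def TwoSidedIdeal.fSubmodule (F : Type*) {A : Type*} [Field F] [Ring A] [Algebra F A]
    (I : TwoSidedIdeal A) : Submodule F A where
  carrier := I
  add_mem' := fun h1 h2 => I.add_mem h1 h2
  zero_mem' := I.zero_mem
  smul_mem' := fun c x hx => by
    rw [Algebra.smul_def]; exact I.mul_mem_left _ _ hx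

lemma TwoSidedIdeal.exists_ne_zero {A : Type*} [Ring A] {I : TwoSidedIdeal A} (hI : I ≠ ⊥) :
    ∃ x ∈ I, x ≠ 0 := by
  by_contra h
  push_neg at h
  exact hI <| SetLike.ext fun x =>
    ⟨fun hx => (TwoSidedIdeal.mem_bot A).2 (h x hx),
     fun hx => by rw [(TwoSidedIdeal.mem_bot A).1 hx]; exact I.zero_mem⟩

lemma TwoSidedIdeal.eq_top_of_one_mem {A : Type*} [Ring A] {I : TwoSidedIdeal A}
    (h : (1 : A) ∈ I) : I = ⊤ :=
  SetLike.ext fun x => ⟨fun _ => TwoSidedIdeal.mem_top A,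
    fun _ => by simpa using I.mul_mem_left x 1 h⟩

/-- A linear functional vanishing on a proper two-sided ideal with value `1` at `1`. -/
lemma exists_functional {A : Type*} [Ring A] [Algebra F A] (I : TwoSidedIdeal A)
    (hI : I ≠ ⊤) : ∃ f : A →ₗ[F] F, (∀ x ∈ I, f x = 0) ∧ f 1 = 1 := by
  have h1 : (1 : A) ∉ TwoSidedIdeal.fSubmodule F I := by
    intro h
    exact hI (TwoSidedIdeal.eq_top_of_one_mem h)
  obtain ⟨f, hf1, hf0⟩ := Submodule.exists_dual_map_eq_bot_of_notMem h1 inferInstance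
  have hker : ∀ x ∈ I, f x = 0 := by
    intro x hx
    have : f x ∈ Submodule.map f (TwoSidedIdeal.fSubmodule F I) :=
      Submodule.mem_map_of_mem hx
    rw [hf0] at this
    simpa using this
  refine ⟨(f 1)⁻¹ • f, fun x hx => by simp [hker x hx], by
    simp [inv_mul_cancel₀ hf1]⟩

variable {A B : Type*} [Ring A] [Algebra F A] [Ring B] [Algebra F B]

/-- Contract the right factor with a functional. -/
noncomputable def contrR (f : B →ₗ[F] F) : A ⊗[F] B →ₗ[F] A :=
  (TensorProduct.rid F A).toLinearMap ∘ₗ LinearMap.lTensor A f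

@[simp] lemma contrR_tmul (f : B →ₗ[F] F) (a : A) (b : B) :
    contrR f (a ⊗ₜ[F] b) = f b • a := by
  simp [contrR]

/-- Contract the left factor with a functional. -/
noncomputable def contrL (f : A →ₗ[F] F) : A ⊗[F] B →ₗ[F] B :=
  (TensorProduct.lid F B).toLinearMap ∘ₗ LinearMap.rTensor B f

@[simp] lemma contrL_tmul (f : A →ₗ[F] F) (a : A) (b : B) :
    contrL f (a ⊗ₜ[F] b) = f a • b := by
  simp [contrL]

lemma contrR_eq_zero_of_mem {f : B →ₗ[F] F} {S : Set A} {T : Set B}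
    (hf : ∀ y ∈ T, f y = 0) {t : A ⊗[F] B} (ht : t ∈ tmulSpan F S T) :
    contrR f t = 0 := by
  have : tmulSpan F S T ≤ LinearMap.ker (contrR (A := A) f) := by
    rw [tmulSpan, Submodule.span_le]
    rintro _ ⟨x, hx, y, hy, rfl⟩
    simp [LinearMap.mem_ker, hf y hy]
  simpa using this ht

lemma contrL_eq_zero_of_mem {f : A →ₗ[F] F} {S : Set A} {T : Set B}
    (hf : ∀ x ∈ S, f x = 0) {t : A ⊗[F] B} (ht : t ∈ tmulSpan F S T) :
    contrL f t = 0 := by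
  have : tmulSpan F S T ≤ LinearMap.ker (contrL (B := B) f) := by
    rw [tmulSpan, Submodule.span_le]
    rintro _ ⟨x, hx, y, hy, rfl⟩
    simp [LinearMap.mem_ker, hf x hx]
  simpa using this ht

/-- If `t` commutes with all `x ⊗ 1` then `t` lies in `Z(A) ⊗ B`. -/
lemma mem_tmulSpan_center_left {t : A ⊗[F] B}
    (ht : ∀ x : A, (x ⊗ₜ[F] (1 : B)) * t = t * (x ⊗ₜ[F] (1 : B))) :
    t ∈ tmulSpan F (Subalgebra.center F A : Set A) (Set.univ : Set B) := by
  classical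
  set bB := Module.Basis.ofVectorSpace F B with hbB
  set e : A ⊗[F] B ≃ₗ[F] (_ →₀ A) :=
    (TensorProduct.congr (LinearEquiv.refl F A) bB.repr) ≪≫ₗ
      TensorProduct.finsuppScalarRight F F A _ with he
  have he_tmul : ∀ (a : A) (b : B) (j), e (a ⊗ₜ[F] b) j = bB.repr b j • a := by
    intro a b j
    simp [he, LinearEquiv.trans_apply, TensorProduct.congr_tmul]
  have hleft : ∀ (x : A) (s : A ⊗[F] B) (j), e ((x ⊗ₜ[F] (1 : B)) * s) j = x * e s j := by
    intro x s
    induction s using TensorProduct.induction_on with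
    | zero => intro j; simp
    | tmul a b =>
      intro j
      have h1 : (x ⊗ₜ[F] (1 : B)) * (a ⊗ₜ[F] b) = (x * a) ⊗ₜ[F] b := by
        simp [Algebra.TensorProduct.tmul_mul_tmul]
      rw [h1, he_tmul, he_tmul, mul_smul_comm]
    | add u v hu hv =>
      intro j
      rw [mul_add, map_add, map_add]
      simp [Finsupp.add_apply, hu j, hv j, mul_add]
  have hright : ∀ (x : A) (s : A ⊗[F] B) (j), e (s * (x ⊗ₜ[F] (1 : B))) j = e s j * x := by
    intro x s
    induction s using TensorProduct.induction_on with
    | zero => intro j; simp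
    | tmul a b =>
      intro j
      have h1 : (a ⊗ₜ[F] b) * (x ⊗ₜ[F] (1 : B)) = (a * x) ⊗ₜ[F] b := by
        simp [Algebra.TensorProduct.tmul_mul_tmul]
      rw [h1, he_tmul, he_tmul, smul_mul_assoc]
    | add u v hu hv =>
      intro j
      rw [add_mul, map_add, map_add]
      simp [Finsupp.add_apply, hu j, hv j, add_mul]
  have hcent : ∀ j, e t j ∈ Subalgebra.center F A := by
    intro j
    rw [Subalgebra.mem_center_iff]
    intro x
    have := congrArg (fun s => e s j) (ht x)
    simpa [hleft x t j, hright x t j] using this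
  have hsingle : ∀ (j) (a : A), e (a ⊗ₜ[F] bB j) = Finsupp.single j a := by
    intro j a
    ext i
    rw [he_tmul]
    simp [Finsupp.single_apply, ite_smul]
  have hrecon : t = (e t).sum fun j a => a ⊗ₜ[F] (bB j) := by
    apply e.injective
    rw [map_finsuppSum]
    rw [Finsupp.sum_congr (fun j _ => hsingle j (e t j))]
    exact (Finsupp.sum_single (e t)).symm
  rw [hrecon]
  refine Submodule.sum_mem _ fun j _ => ?_
  exact Submodule.subset_span ⟨e t j, hcent j, bB j, Set.mem_univ _, rfl⟩

/-- If `t` commutes with all `1 ⊗ y` then `t` lies in `A ⊗ Z(B)`. -/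
lemma mem_tmulSpan_center_right {t : A ⊗[F] B}
    (ht : ∀ y : B, ((1 : A) ⊗ₜ[F] y) * t = t * ((1 : A) ⊗ₜ[F] y)) :
    t ∈ tmulSpan F (Set.univ : Set A) (Subalgebra.center F B : Set B) := by
  classical
  set bA := Module.Basis.ofVectorSpace F A with hbA
  set e : A ⊗[F] B ≃ₗ[F] (_ →₀ B) :=
    (TensorProduct.congr bA.repr (LinearEquiv.refl F B)) ≪≫ₗ
      TensorProduct.finsuppScalarLeft F B _ with he
  have he_tmul : ∀ (a : A) (b : B) (j), e (a ⊗ₜ[F] b) j = bA.repr a j • b := by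
    intro a b j
    simp [he, LinearEquiv.trans_apply, TensorProduct.congr_tmul]
  have hleft : ∀ (y : B) (s : A ⊗[F] B) (j), e (((1 : A) ⊗ₜ[F] y) * s) j = y * e s j := by
    intro y s
    induction s using TensorProduct.induction_on with
    | zero => intro j; simp
    | tmul a b =>
      intro j
      have h1 : ((1 : A) ⊗ₜ[F] y) * (a ⊗ₜ[F] b) = a ⊗ₜ[F] (y * b) := by
        simp [Algebra.TensorProduct.tmul_mul_tmul]
      rw [h1, he_tmul, he_tmul, mul_smul_comm]
    | add u v hu hv =>
      intro j
      rw [mul_add, map_add, map_add]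
      simp [Finsupp.add_apply, hu j, hv j, mul_add]
  have hright : ∀ (y : B) (s : A ⊗[F] B) (j), e (s * ((1 : A) ⊗ₜ[F] y)) j = e s j * y := by
    intro y s
    induction s using TensorProduct.induction_on with
    | zero => intro j; simp
    | tmul a b =>
      intro j
      have h1 : (a ⊗ₜ[F] b) * ((1 : A) ⊗ₜ[F] y) = a ⊗ₜ[F] (b * y) := by
        simp [Algebra.TensorProduct.tmul_mul_tmul]
      rw [h1, he_tmul, he_tmul, smul_mul_assoc]
    | add u v hu hv =>
      intro j
      rw [add_mul, map_add, map_add]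
      simp [Finsupp.add_apply, hu j, hv j, add_mul]
  have hcent : ∀ j, e t j ∈ Subalgebra.center F B := by
    intro j
    rw [Subalgebra.mem_center_iff]
    intro y
    have := congrArg (fun s => e s j) (ht y)
    simpa [hleft y t j, hright y t j] using this
  have hsingle : ∀ (j) (b : B), e ((bA j) ⊗ₜ[F] b) = Finsupp.single j b := by
    intro j b
    ext i
    rw [he_tmul]
    simp [Finsupp.single_apply, ite_smul]
  have hrecon : t = (e t).sum fun j b => (bA j) ⊗ₜ[F] b := by
    apply e.injective
    rw [map_finsuppSum]
    rw [Finsupp.sum_congr (fun j _ => hsingle j (e t j))]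
    exact (Finsupp.sum_single (e t)).symm
  rw [hrecon]
  refine Submodule.sum_mem _ fun j _ => ?_
  exact Submodule.subset_span ⟨bA j, Set.mem_univ _, e t j, hcent j, rfl⟩

/-- Intersection: in `K ⊗ B` and in `A ⊗ L` implies in `K ⊗ L`. -/
lemma mem_tmulSpan_of_left_right (K : Subalgebra F A) (L : Subalgebra F B) {t : A ⊗[F] B}
    (h1 : t ∈ tmulSpan F (K : Set A) (Set.univ : Set B))
    (h2 : t ∈ tmulSpan F (Set.univ : Set A) (L : Set B)) :
    t ∈ tmulSpan F (K : Set A) (L : Set B) := by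
  obtain ⟨Lc, hLc⟩ := (Subalgebra.toSubmodule L).exists_isCompl
  set pr : B →ₗ[F] B :=
    (Subalgebra.toSubmodule L).subtype ∘ₗ
      Submodule.projectionOnto _ Lc hLc with hpr
  have hprL : ∀ y ∈ L, pr y = y := by
    intro y hy
    have hy' : y ∈ Subalgebra.toSubmodule L := hy
    have := Submodule.linearProjOfIsCompl_apply_left hLc ⟨y, hy'⟩
    simp [hpr, this]
  have hprmem : ∀ y, pr y ∈ L :=
    fun y => (Submodule.projectionOnto _ Lc hLc y).2
  set Ψ := LinearMap.lTensor A pr with hΨ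
  have hfix : Ψ t = t := by
    have : tmulSpan F (Set.univ : Set A) (L : Set B) ≤
        LinearMap.ker (Ψ - LinearMap.id) := by
      rw [tmulSpan, Submodule.span_le]
      rintro _ ⟨x, -, y, hy, rfl⟩
      simp [LinearMap.mem_ker, hΨ, hprL y hy]
    have := this h2
    rw [LinearMap.mem_ker, LinearMap.sub_apply, sub_eq_zero] at this
    simpa using this
  have hmem : Ψ t ∈ tmulSpan F (K : Set A) (L : Set B) := by
    have : tmulSpan F (K : Set A) (Set.univ : Set B) ≤
        Submodule.comap Ψ (tmulSpan F (K : Set A) (L : Set B)) := by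
      rw [tmulSpan, Submodule.span_le]
      rintro _ ⟨x, hx, y, -, rfl⟩
      simp only [Submodule.mem_comap, hΨ, LinearMap.lTensor_tmul]
      exact Submodule.subset_span ⟨x, hx, pr y, hprmem y, rfl⟩
    exact this h1
  rwa [hfix] at hmem

end AuxNS

set_option maxHeartbeats 1000000 in
set_option synthInstance.maxHeartbeats 100000 in
theorem center_tensor_center_isField_of_all_ideals_admissible
    (F A B A' B' : Type*) [Field F] [Ring A] [Algebra F A] [Ring B] [Algebra F B]
    [Ring A'] [Algebra F A'] [Ring B'] [Algebra F B']
    (IA : TwoSidedIdeal A) (IB : TwoSidedIdeal B)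
    (hA : IsNearlySimpleWith IA) (hB : IsNearlySimpleWith IB)
    (hadm : ∀ J : TwoSidedIdeal (A ⊗[F] B), Admissible F IA IB J)
    (qA : A →ₐ[F] A') (hqAsurj : Function.Surjective qA)
    (hkerA : ∀ x : A, qA x = 0 ↔ x ∈ IA)
    (qB : B →ₐ[F] B') (hqBsurj : Function.Surjective qB)
    (hkerB : ∀ y : B, qB y = 0 ↔ y ∈ IB) :
    IsField ((Subalgebra.center F A') ⊗[F] (Subalgebra.center F B')) := by
  classical
  set K := Subalgebra.center F A' with hK
  set L := Subalgebra.center F B' with hL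
  set ι : K ⊗[F] L →ₐ[F] A' ⊗[F] B' := Algebra.TensorProduct.map K.val L.val with hι
  -- nontriviality
  have h1A' : (1 : A') ≠ 0 := by
    intro h
    apply hA.2.1
    exact TwoSidedIdeal.eq_top_of_one_mem ((hkerA 1).1 (by rw [map_one, h]))
  have h1B' : (1 : B') ≠ 0 := by
    intro h
    apply hB.2.1
    exact TwoSidedIdeal.eq_top_of_one_mem ((hkerB 1).1 (by rw [map_one, h]))
  have hnt : (1 : A' ⊗[F] B') ≠ 0 := by
    obtain ⟨φ, hφ⟩ : ∃ φ : Module.Dual F A', φ 1 ≠ 0 := by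
      by_contra h
      push_neg at h
      exact h1A' ((Module.forall_dual_apply_eq_zero_iff F (1 : A')).1 h)
    obtain ⟨ψ, hψ⟩ : ∃ ψ : Module.Dual F B', ψ 1 ≠ 0 := by
      by_contra h
      push_neg at h
      exact h1B' ((Module.forall_dual_apply_eq_zero_iff F (1 : B')).1 h)
    intro h
    have h0 := congrArg (fun t => (TensorProduct.lid F F) (TensorProduct.map φ ψ t)) h
    simp only [Algebra.TensorProduct.one_def, TensorProduct.map_tmul, TensorProduct.lid_tmul,
      map_zero, smul_eq_mul] at h0
    exact mul_ne_zero hφ hψ h0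
  -- the quotient map on tensor products
  set q : A ⊗[F] B →ₐ[F] A' ⊗[F] B' := Algebra.TensorProduct.map qA qB with hq
  have hq_tmul : ∀ (a : A) (b : B), q (a ⊗ₜ[F] b) = qA a ⊗ₜ[F] qB b := fun a b => by
    simp [hq]
  have hqsurj : Function.Surjective q := by
    intro z
    induction z using TensorProduct.induction_on with
    | zero => exact ⟨0, map_zero q⟩
    | tmul a' b' =>
      obtain ⟨a, rfl⟩ := hqAsurj a'
      obtain ⟨b, rfl⟩ := hqBsurj b'
      exact ⟨a ⊗ₜ[F] b, hq_tmul a b⟩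
    | add u v hu hv =>
      obtain ⟨x, rfl⟩ := hu
      obtain ⟨y, rfl⟩ := hv
      exact ⟨x + y, map_add q x y⟩
  -- functionals and nonzero elements
  obtain ⟨fA, hfA0, hfA1⟩ := exists_functional (F := F) IA hA.2.1
  obtain ⟨fB, hfB0, hfB1⟩ := exists_functional (F := F) IB hB.2.1
  obtain ⟨x0, hx0I, hx0⟩ := TwoSidedIdeal.exists_ne_zero hA.1
  obtain ⟨y0, hy0I, hy0⟩ := TwoSidedIdeal.exists_ne_zero hB.1
  -- simplicity of A' ⊗ B'
  have hsimple : IsSimpleRing (A' ⊗[F] B') := by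
    have hTnt : Nontrivial (TwoSidedIdeal (A' ⊗[F] B')) :=
      ⟨⊥, ⊤, fun h => hnt ((TwoSidedIdeal.mem_bot _).1
        (by rw [h]; exact TwoSidedIdeal.mem_top _))⟩
    refine ⟨{ toNontrivial := hTnt, eq_bot_or_eq_top := ?_ }⟩
    intro J'
    set J : TwoSidedIdeal (A ⊗[F] B) := TwoSidedIdeal.comap q J' with hJ
    have hmemJ : ∀ z, z ∈ J ↔ q z ∈ J' := fun z => TwoSidedIdeal.mem_comap q
    have hx01 : (x0 ⊗ₜ[F] (1 : B)) ∈ J := by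
      rw [hmemJ]
      have h0 : q (x0 ⊗ₜ[F] (1 : B)) = 0 := by
        rw [hq_tmul, (hkerA x0).2 hx0I, TensorProduct.zero_tmul]
      rw [h0]
      exact J'.zero_mem
    have hy01 : ((1 : A) ⊗ₜ[F] y0) ∈ J := by
      rw [hmemJ]
      have h0 : q ((1 : A) ⊗ₜ[F] y0) = 0 := by
        rw [hq_tmul, (hkerB y0).2 hy0I, TensorProduct.tmul_zero]
      rw [h0]
      exact J'.zero_mem
    rcases hadm J with hc | hc | hc | hc | hc | hc
    · -- J = ⊥ : impossible
      exfalso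
      have h0 : x0 ⊗ₜ[F] (1 : B) = 0 := (TwoSidedIdeal.mem_bot _).1 (hc ▸ hx01)
      have h2 := congrArg (contrR (F := F) fB) h0
      rw [contrR_tmul, hfB1, one_smul, map_zero] at h2
      exact hx0 h2
    · -- J = ⊤ : J' = ⊤
      right
      refine SetLike.ext fun z => ⟨fun _ => TwoSidedIdeal.mem_top _, fun _ => ?_⟩
      obtain ⟨w, rfl⟩ := hqsurj z
      exact (hmemJ w).1 (by rw [hc]; exact TwoSidedIdeal.mem_top _)
    · -- J = I_A ⊗ I_B : impossible
      exfalso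
      have hx : (x0 ⊗ₜ[F] (1 : B)) ∈ tmulSpan F (IA : Set A) (IB : Set B) := by
        have h0 : (x0 ⊗ₜ[F] (1 : B)) ∈ (J : Set (A ⊗[F] B)) := hx01
        rw [hc] at h0
        exact h0
      have h2 := contrR_eq_zero_of_mem (f := fB) (fun y hy => hfB0 y hy) hx
      rw [contrR_tmul, hfB1, one_smul] at h2
      exact hx0 h2
    · -- J = I_A ⊗ B : impossible
      exfalso
      have hy : ((1 : A) ⊗ₜ[F] y0) ∈ tmulSpan F (IA : Set A) (Set.univ : Set B) := by
        have h0 : ((1 : A) ⊗ₜ[F] y0) ∈ (J : Set (A ⊗[F] B)) := hy01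
        rw [hc] at h0
        exact h0
      have h2 := contrL_eq_zero_of_mem (f := fA) (fun x hx => hfA0 x hx) hy
      rw [contrL_tmul, hfA1, one_smul] at h2
      exact hy0 h2
    · -- J = A ⊗ I_B : impossible
      exfalso
      have hx : (x0 ⊗ₜ[F] (1 : B)) ∈ tmulSpan F (Set.univ : Set A) (IB : Set B) := by
        have h0 : (x0 ⊗ₜ[F] (1 : B)) ∈ (J : Set (A ⊗[F] B)) := hx01
        rw [hc] at h0
        exact h0
      have h2 := contrR_eq_zero_of_mem (f := fB) (fun y hy => hfB0 y hy) hx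
      rw [contrR_tmul, hfB1, one_smul] at h2
      exact hx0 h2
    · -- J = I_A ⊗ B + A ⊗ I_B : J' = ⊥
      left
      refine SetLike.ext fun z =>
        ⟨fun hz => ?_, fun hz => by
          rw [(TwoSidedIdeal.mem_bot _).1 hz]; exact J'.zero_mem⟩
      rw [TwoSidedIdeal.mem_bot]
      obtain ⟨w, rfl⟩ := hqsurj z
      have hw : w ∈ tmulSpan F (IA : Set A) (Set.univ : Set B) ⊔
          tmulSpan F (Set.univ : Set A) (IB : Set B) := by
        have h0 : w ∈ (J : Set (A ⊗[F] B)) := (hmemJ w).2 hz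
        rw [hc] at h0
        exact h0
      have hker1 : tmulSpan F (IA : Set A) (Set.univ : Set B) ≤
          LinearMap.ker q.toLinearMap := by
        rw [tmulSpan, Submodule.span_le]
        rintro _ ⟨x, hx, y, -, rfl⟩
        have h0 : qA x = 0 := (hkerA x).2 hx
        simp [LinearMap.mem_ker, hq_tmul, h0]
      have hker2 : tmulSpan F (Set.univ : Set A) (IB : Set B) ≤
          LinearMap.ker q.toLinearMap := by
        rw [tmulSpan, Submodule.span_le]
        rintro _ ⟨x, -, y, hy, rfl⟩
        have h0 : qB y = 0 := (hkerB y).2 hy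
        simp [LinearMap.mem_ker, hq_tmul, h0]
      have := (sup_le hker1 hker2) hw
      simpa [LinearMap.mem_ker] using this
  -- ι agrees with the linear tensor-product map
  have hιlin0 : ι.toLinearMap = TensorProduct.map (K.val.toLinearMap) (L.val.toLinearMap) :=
    TensorProduct.ext' fun k l => by simp [hι]
  have hιlin : ∀ z, ι z = TensorProduct.map (K.val.toLinearMap) (L.val.toLinearMap) z :=
    fun z => by rw [← hιlin0]; rfl
  -- injectivity of ι
  have hι_inj : Function.Injective ι := by
    have h1 : Function.Injective
        (TensorProduct.map (K.val.toLinearMap) (L.val.toLinearMap)) := by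
      rw [← LinearMap.lTensor_comp_rTensor, LinearMap.coe_comp]
      exact Function.Injective.comp
        (Module.Flat.lTensor_preserves_injective_linearMap _ fun a b h => Subtype.ext h)
        (Module.Flat.rTensor_preserves_injective_linearMap _ fun a b h => Subtype.ext h)
    intro z1 z2 h
    apply h1
    rw [← hιlin, ← hιlin, h]
  -- range of ι is central
  have hcent : ∀ (z : K ⊗[F] L) (w : A' ⊗[F] B'), ι z * w = w * ι z := by
    intro z w
    induction z using TensorProduct.induction_on with
    | zero => simp
    | add u v hu hv => rw [map_add, add_mul, mul_add, hu, hv]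
    | tmul k l =>
      induction w using TensorProduct.induction_on with
      | zero => simp
      | add u v hu hv => rw [mul_add, add_mul, hu, hv]
      | tmul a b =>
        have hk := Subalgebra.mem_center_iff.1 k.2 a
        have hl := Subalgebra.mem_center_iff.1 l.2 b
        simp only [hι, Algebra.TensorProduct.map_tmul,
          Algebra.TensorProduct.tmul_mul_tmul]
        rw [show K.val k = (k : A') from rfl, show L.val l = (l : B') from rfl, hk, hl]
  -- assemble the field structure
  refine ⟨⟨0, 1, fun h => hnt (by rw [← map_one ι, ← h, map_zero])⟩,
    fun x y => hι_inj (by rw [map_mul, map_mul]; exact hcent x (ι y)), ?_⟩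
  intro z hz
  have hzι : ι z ≠ 0 := fun h => hz (hι_inj (by rw [h, map_zero]))
  have hcentz : (ι z) ∈ Subring.center (A' ⊗[F] B') :=
    Subring.mem_center_iff.2 fun g => (hcent z g).symm
  have hf := IsSimpleRing.isField_center (A' ⊗[F] B')
  obtain ⟨u, hu⟩ := hf.mul_inv_cancel
    (a := (⟨ι z, hcentz⟩ : Subring.center (A' ⊗[F] B')))
    (by simpa [Subtype.ext_iff] using hzι)
  have hu' : ι z * (u : A' ⊗[F] B') = 1 := congrArg Subtype.val hu
  have hucent : ∀ w : A' ⊗[F] B', w * (u : A' ⊗[F] B') = (u : A' ⊗[F] B') * w :=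
    fun w => Subring.mem_center_iff.1 u.2 w
  have hu1 : (u : A' ⊗[F] B') ∈ tmulSpan F (K : Set A') (Set.univ : Set B') :=
    mem_tmulSpan_center_left fun x => hucent _
  have hu2 : (u : A' ⊗[F] B') ∈ tmulSpan F (Set.univ : Set A') (L : Set B') :=
    mem_tmulSpan_center_right fun y => hucent _
  have hu3 := mem_tmulSpan_of_left_right K L hu1 hu2
  have hrange : tmulSpan F (K : Set A') (L : Set B') ≤
      LinearMap.range (TensorProduct.map (K.val.toLinearMap) (L.val.toLinearMap)) := by
    rw [tmulSpan, Submodule.span_le]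
    rintro _ ⟨x, hx, y, hy, rfl⟩
    exact ⟨(⟨x, hx⟩ : K) ⊗ₜ[F] (⟨y, hy⟩ : L), by simp⟩
  obtain ⟨v, hv⟩ := hrange hu3
  refine ⟨v, hι_inj ?_⟩
  rw [map_mul, map_one, hιlin v, hv, hu']
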